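/- Let F be the cumulative distribution function of the standard Gaussian measure on ℝ, φ = F' its density, and U = φ ∘ F⁻¹ on (0,1), extended by U(0) = U(1) = 0. Then U is strictly positive on (0,1) and concave on [0,1]; consequently Φ = −U is convex on [0,1] and, on (0,1), −1/Φ'' = −U is convex. -/

import Mathlib

open MeasureTheory

/-- The standard Gaussian density `φ(t) = (2π)^{−1/2} e^{−t²/2}`. -/
noncomputable def gaussPdf (t : ℝ) : ℝ :=
  (Real.sqrt (2 * Real.pi))⁻¹ * Real.exp (-t ^ 2 / 2)

/-- The standard Gaussian cumulative distribution function
`F(t) = ∫_{−∞}^{t} (2π)^{−1/2} e^{−s²/2} ds`. -/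
noncomputable def gaussCdf (t : ℝ) : ℝ :=
  ∫ s in Set.Iic t, gaussPdf s

/-- The inverse `F⁻¹ : (0,1) → ℝ` of the standard Gaussian cdf. -/
noncomputable def gaussCdfInv : ℝ → ℝ :=
  Function.invFun gaussCdf

/-- The Gaussian isoperimetry function `U = φ ∘ F⁻¹` on `(0,1)`, extended by
`U(0) = U(1) = 0` (and by `0` outside `[0,1]`). -/
noncomputable def isoUext (x : ℝ) : ℝ :=
  if x ∈ Set.Ioo (0 : ℝ) 1 then gaussPdf (gaussCdfInv x) else 0

open Real Filter Set Topology
open scoped ENNReal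

lemma gaussPdf_pos (t : ℝ) : 0 < gaussPdf t := by
  have : 0 < Real.sqrt (2 * Real.pi) := Real.sqrt_pos.2 (by positivity)
  exact mul_pos (inv_pos.2 this) (Real.exp_pos _)

lemma continuous_gaussPdf : Continuous gaussPdf := by
  unfold gaussPdf
  fun_prop

lemma gaussPdf_eq' (x : ℝ) :
    gaussPdf x = (Real.sqrt (2 * Real.pi))⁻¹ * Real.exp (-(1/2 : ℝ) * x ^ 2) := by
  unfold gaussPdf; ring_nf

lemma hasDerivAt_gaussPdf (t : ℝ) : HasDerivAt gaussPdf (-t * gaussPdf t) t := by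
  have h1 : HasDerivAt (fun s : ℝ => -s ^ 2 / 2) (-t) t := by
    have := ((hasDerivAt_pow 2 t).neg).div_const 2
    refine this.congr_deriv ?_
    simp; ring
  have h2 := (h1.exp).const_mul (Real.sqrt (2 * Real.pi))⁻¹
  have hge : gaussPdf = fun s => (Real.sqrt (2 * Real.pi))⁻¹ * Real.exp (-s ^ 2 / 2) := rfl
  rw [hge]
  refine h2.congr_deriv ?_
  beta_reduce
  ring

lemma integrable_gaussPdf : Integrable gaussPdf := by
  have h : Integrable (fun x : ℝ => Real.exp (-(1/2 : ℝ) * x ^ 2)) :=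
    integrable_exp_neg_mul_sq (by norm_num)
  have := h.const_mul (Real.sqrt (2 * Real.pi))⁻¹
  exact this.congr (Filter.Eventually.of_forall fun x => (gaussPdf_eq' x).symm)

lemma integral_gaussPdf : ∫ s, gaussPdf s = 1 := by
  have h : ∫ x : ℝ, Real.exp (-(1/2 : ℝ) * x ^ 2) = Real.sqrt (Real.pi / (1/2)) :=
    integral_gaussian (1/2)
  rw [show gaussPdf = fun x => (Real.sqrt (2 * Real.pi))⁻¹ * Real.exp (-(1/2 : ℝ) * x ^ 2)
    from funext gaussPdf_eq']
  rw [integral_const_mul, h, show Real.pi / (1/2) = 2 * Real.pi by ring, inv_mul_cancel₀]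
  exact (Real.sqrt_pos.2 (by positivity)).ne'

lemma gaussCdf_eq (t : ℝ) : gaussCdf t = gaussCdf 0 + ∫ s in (0:ℝ)..t, gaussPdf s := by
  have h := intervalIntegral.integral_Iic_sub_Iic (a := (0:ℝ)) (b := t) (f := gaussPdf)
    (μ := volume) integrable_gaussPdf.integrableOn integrable_gaussPdf.integrableOn
  unfold gaussCdf
  rw [← h]; ring

lemma hasDerivAt_gaussCdf (t : ℝ) : HasDerivAt gaussCdf (gaussPdf t) t := by
  have h : HasDerivAt (fun u => ∫ s in (0:ℝ)..u, gaussPdf s) (gaussPdf t) t :=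
    intervalIntegral.integral_hasDerivAt_right
      integrable_gaussPdf.intervalIntegrable
      (continuous_gaussPdf.stronglyMeasurableAtFilter _ _)
      continuous_gaussPdf.continuousAt
  exact ((h.const_add (gaussCdf 0)).congr_of_eventuallyEq
    (Filter.Eventually.of_forall fun u => gaussCdf_eq u))

lemma strictMono_gaussCdf : StrictMono gaussCdf :=
  strictMono_of_hasDerivAt_pos hasDerivAt_gaussCdf gaussPdf_pos

noncomputable def gaussMeasure : Measure ℝ :=
  volume.withDensity (fun s => ENNReal.ofReal (gaussPdf s))

lemma gaussMeasure_apply {s : Set ℝ} (hs : MeasurableSet s) :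
    gaussMeasure s = ENNReal.ofReal (∫ x in s, gaussPdf x) := by
  rw [gaussMeasure, withDensity_apply _ hs,
    ← ofReal_integral_eq_lintegral_ofReal integrable_gaussPdf.integrableOn
      (Filter.Eventually.of_forall fun x => (gaussPdf_pos x).le)]

lemma gaussMeasure_univ : gaussMeasure univ = 1 := by
  rw [gaussMeasure_apply MeasurableSet.univ]
  simp [integral_gaussPdf]

lemma gaussCdf_eq_toReal (t : ℝ) : gaussCdf t = (gaussMeasure (Iic t)).toReal := by
  rw [gaussMeasure_apply measurableSet_Iic, ENNReal.toReal_ofReal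
    (setIntegral_nonneg measurableSet_Iic fun x _ => (gaussPdf_pos x).le)]
  rfl

lemma tendsto_gaussCdf_atTop : Tendsto gaussCdf atTop (𝓝 1) := by
  have h := tendsto_measure_Iic_atTop (μ := gaussMeasure)
  rw [gaussMeasure_univ] at h
  have h2 : Tendsto (fun t => (gaussMeasure (Iic t)).toReal) atTop (𝓝 (1 : ℝ≥0∞).toReal) :=
    (ENNReal.tendsto_toReal ENNReal.one_ne_top).comp h
  simpa [← gaussCdf_eq_toReal] using h2

lemma tendsto_gaussCdf_atBot : Tendsto gaussCdf atBot (𝓝 0) := by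
  have hinter : ⋂ t : ℝ, Iic t = (∅ : Set ℝ) := by
    ext x
    simp only [mem_iInter, mem_Iic, mem_empty_iff_false, iff_false, not_forall, not_le]
    exact ⟨x - 1, by linarith⟩
  have h := tendsto_measure_iInter_atBot (μ := gaussMeasure)
    (fun t => measurableSet_Iic.nullMeasurableSet) (fun a b hab => Iic_subset_Iic.2 hab)
    ⟨0, by rw [gaussMeasure_apply measurableSet_Iic]; exact ENNReal.ofReal_ne_top⟩
  rw [hinter] at h
  simp only [measure_empty] at h
  have h2 : Tendsto (fun t => (gaussMeasure (Iic t)).toReal) atBot (𝓝 (0 : ℝ≥0∞).toReal) :=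
    (ENNReal.tendsto_toReal (by simp)).comp h
  simpa [← gaussCdf_eq_toReal] using h2

lemma gaussCdf_mem_Ioo (t : ℝ) : gaussCdf t ∈ Ioo (0:ℝ) 1 := by
  constructor
  · have h0 : (0:ℝ) ≤ gaussCdf (t - 1) :=
      strictMono_gaussCdf.monotone.le_of_tendsto tendsto_gaussCdf_atBot (t - 1)
    exact lt_of_le_of_lt h0 (strictMono_gaussCdf (by linarith))
  · have h1 : gaussCdf (t + 1) ≤ 1 :=
      strictMono_gaussCdf.monotone.ge_of_tendsto tendsto_gaussCdf_atTop (t + 1)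
    exact lt_of_lt_of_le (strictMono_gaussCdf (by linarith)) h1

lemma gaussCdf_surj {x : ℝ} (hx : x ∈ Ioo (0:ℝ) 1) : ∃ t, gaussCdf t = x := by
  obtain ⟨a, ha⟩ := (tendsto_gaussCdf_atBot.eventually_lt_const hx.1).exists
  obtain ⟨b, hb⟩ := (tendsto_gaussCdf_atTop.eventually_const_lt hx.2).exists
  have hab : a ≤ b := le_of_lt (strictMono_gaussCdf.lt_iff_lt.1 (ha.trans hb))
  have := intermediate_value_Icc hab
    (fun s _ => ((hasDerivAt_gaussCdf s).continuousAt).continuousWithinAt)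
  obtain ⟨t, _, ht⟩ := this ⟨ha.le, hb.le⟩
  exact ⟨t, ht⟩

lemma gaussCdfInv_gaussCdf (t : ℝ) : gaussCdfInv (gaussCdf t) = t :=
  Function.leftInverse_invFun strictMono_gaussCdf.injective t

lemma gaussCdf_gaussCdfInv {x : ℝ} (hx : x ∈ Ioo (0:ℝ) 1) :
    gaussCdf (gaussCdfInv x) = x :=
  Function.invFun_eq (gaussCdf_surj hx)

lemma monotoneOn_gaussCdfInv : StrictMonoOn gaussCdfInv (Ioo (0:ℝ) 1) := by
  intro x hx y hy hxy
  have := gaussCdf_gaussCdfInv hx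
  have := gaussCdf_gaussCdfInv hy
  rw [← strictMono_gaussCdf.lt_iff_lt]
  rw [gaussCdf_gaussCdfInv hx, gaussCdf_gaussCdfInv hy]
  exact hxy

lemma continuousAt_gaussCdfInv {x : ℝ} (hx : x ∈ Ioo (0:ℝ) 1) :
    ContinuousAt gaussCdfInv x := by
  rw [ContinuousAt, tendsto_order]
  constructor
  · intro a ha
    have h1 : gaussCdf a < x := by
      rw [← gaussCdf_gaussCdfInv hx]; exact strictMono_gaussCdf ha
    filter_upwards [Ioo_mem_nhds (max_lt h1 hx.1) hx.2] with y hy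
    have hy' : y ∈ Ioo (0:ℝ) 1 := ⟨lt_of_le_of_lt (le_max_right _ _) hy.1, hy.2⟩
    have : gaussCdf a < gaussCdf (gaussCdfInv y) := by
      rw [gaussCdf_gaussCdfInv hy']
      exact lt_of_le_of_lt (le_max_left _ _) hy.1
    exact strictMono_gaussCdf.lt_iff_lt.1 this
  · intro a ha
    have h1 : x < gaussCdf a := by
      rw [← gaussCdf_gaussCdfInv hx]; exact strictMono_gaussCdf ha
    filter_upwards [Ioo_mem_nhds hx.1 (lt_min h1 hx.2)] with y hy
    have hy' : y ∈ Ioo (0:ℝ) 1 := ⟨hy.1, lt_of_lt_of_le hy.2 (min_le_right _ _)⟩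
    have : gaussCdf (gaussCdfInv y) < gaussCdf a := by
      rw [gaussCdf_gaussCdfInv hy']
      exact lt_of_lt_of_le hy.2 (min_le_left _ _)
    exact strictMono_gaussCdf.lt_iff_lt.1 this

lemma tendsto_gaussCdfInv_zero :
    Tendsto gaussCdfInv (𝓝[Ioo (0:ℝ) 1] 0) atBot := by
  rw [tendsto_atBot]
  intro b
  have hb := gaussCdf_mem_Ioo b
  have hmem : Ioo (0:ℝ) (gaussCdf b) ∈ 𝓝[Ioo (0:ℝ) 1] 0 := by
    apply nhdsWithin_mono 0 (Ioo_subset_Ioi_self)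
    exact Ioo_mem_nhdsGT_of_mem ⟨le_refl _, hb.1⟩
  filter_upwards [hmem, self_mem_nhdsWithin] with y hy hy'
  have : gaussCdf (gaussCdfInv y) < gaussCdf b := by
    rw [gaussCdf_gaussCdfInv hy']; exact hy.2
  exact (strictMono_gaussCdf.lt_iff_lt.1 this).le

lemma tendsto_gaussCdfInv_one :
    Tendsto gaussCdfInv (𝓝[Ioo (0:ℝ) 1] 1) atTop := by
  rw [tendsto_atTop]
  intro b
  have hb := gaussCdf_mem_Ioo b
  have hmem : Ioo (gaussCdf b) 1 ∈ 𝓝[Ioo (0:ℝ) 1] 1 := by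
    apply nhdsWithin_mono 1 (Ioo_subset_Iio_self)
    exact Ioo_mem_nhdsLT_of_mem ⟨hb.2, le_refl _⟩
  filter_upwards [hmem, self_mem_nhdsWithin] with y hy hy'
  have : gaussCdf b < gaussCdf (gaussCdfInv y) := by
    rw [gaussCdf_gaussCdfInv hy']; exact hy.1
  exact (strictMono_gaussCdf.lt_iff_lt.1 this).le

lemma tendsto_gaussPdf_atTop : Tendsto gaussPdf atTop (𝓝 0) := by
  have h1 : Tendsto (fun t : ℝ => -t ^ 2 / 2) atTop atBot := by
    apply Tendsto.atBot_div_const (by norm_num)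
    exact tendsto_neg_atBot_iff.2 (tendsto_pow_atTop (by norm_num))
  have h2 : Tendsto (fun t : ℝ => Real.exp (-t ^ 2 / 2)) atTop (𝓝 0) :=
    Real.tendsto_exp_atBot.comp h1
  have hge : gaussPdf = fun t => (Real.sqrt (2 * Real.pi))⁻¹ * Real.exp (-t ^ 2 / 2) := rfl
  rw [hge]
  simpa using h2.const_mul (Real.sqrt (2 * Real.pi))⁻¹

lemma tendsto_gaussPdf_atBot : Tendsto gaussPdf atBot (𝓝 0) := by
  have h := tendsto_gaussPdf_atTop.comp tendsto_neg_atBot_atTop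
  refine h.congr fun t => ?_
  simp [gaussPdf, Function.comp, neg_sq]

lemma hasDerivAt_gaussCdfInv {x : ℝ} (hx : x ∈ Ioo (0:ℝ) 1) :
    HasDerivAt gaussCdfInv (gaussPdf (gaussCdfInv x))⁻¹ x := by
  apply HasDerivAt.of_local_left_inverse (continuousAt_gaussCdfInv hx)
    (hasDerivAt_gaussCdf (gaussCdfInv x)) (gaussPdf_pos _).ne'
  filter_upwards [isOpen_Ioo.mem_nhds hx] with y hy
  exact gaussCdf_gaussCdfInv hy

lemma hasDerivAt_isoUext {x : ℝ} (hx : x ∈ Ioo (0:ℝ) 1) :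
    HasDerivAt isoUext (-(gaussCdfInv x)) x := by
  have hg := hasDerivAt_gaussCdfInv hx
  have hp := hasDerivAt_gaussPdf (gaussCdfInv x)
  have h := hp.comp x hg
  have heq : isoUext =ᶠ[𝓝 x] fun y => gaussPdf (gaussCdfInv y) := by
    filter_upwards [isOpen_Ioo.mem_nhds hx] with y hy
    simp [isoUext, hy]
  have hval : -(gaussCdfInv x) * gaussPdf (gaussCdfInv x) * (gaussPdf (gaussCdfInv x))⁻¹
      = -(gaussCdfInv x) := by
    rw [mul_assoc, mul_inv_cancel₀ (gaussPdf_pos _).ne', mul_one]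
  rw [← hval]
  exact h.congr_of_eventuallyEq heq

lemma cwa_zero : ContinuousWithinAt isoUext (Icc (0:ℝ) 1) 0 := by
  have h1 : Tendsto isoUext (𝓝[Ioo (0:ℝ) 1] 0) (𝓝 0) := by
    have h : Tendsto (fun y => gaussPdf (gaussCdfInv y)) (𝓝[Ioo (0:ℝ) 1] 0) (𝓝 0) :=
      tendsto_gaussPdf_atBot.comp tendsto_gaussCdfInv_zero
    refine h.congr' ?_
    filter_upwards [self_mem_nhdsWithin] with y hy
    simp [isoUext, hy]
  have hsub : Icc (0:ℝ) 1 ⊆ Ioo 0 1 ∪ ({0} ∪ {1}) := by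
    intro y hy
    rcases eq_or_lt_of_le hy.1 with h0 | h0
    · exact Or.inr (Or.inl (by simp [← h0]))
    rcases eq_or_lt_of_le hy.2 with h1 | h1
    · exact Or.inr (Or.inr (by simp [h1]))
    · exact Or.inl ⟨h0, h1⟩
  apply ContinuousWithinAt.mono _ hsub
  apply ContinuousWithinAt.union
  · unfold ContinuousWithinAt
    rw [show isoUext 0 = 0 by simp [isoUext]]
    exact h1
  · apply ContinuousWithinAt.union
    · exact continuousWithinAt_singleton
    · apply continuousWithinAt_of_notMem_closure
      simp

lemma cwa_one : ContinuousWithinAt isoUext (Icc (0:ℝ) 1) 1 := by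
  have h1 : Tendsto isoUext (𝓝[Ioo (0:ℝ) 1] 1) (𝓝 0) := by
    have h : Tendsto (fun y => gaussPdf (gaussCdfInv y)) (𝓝[Ioo (0:ℝ) 1] 1) (𝓝 0) :=
      tendsto_gaussPdf_atTop.comp tendsto_gaussCdfInv_one
    refine h.congr' ?_
    filter_upwards [self_mem_nhdsWithin] with y hy
    simp [isoUext, hy]
  have hsub : Icc (0:ℝ) 1 ⊆ Ioo 0 1 ∪ ({0} ∪ {1}) := by
    intro y hy
    rcases eq_or_lt_of_le hy.1 with h0 | h0
    · exact Or.inr (Or.inl (by simp [← h0]))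
    rcases eq_or_lt_of_le hy.2 with h1 | h1
    · exact Or.inr (Or.inr (by simp [h1]))
    · exact Or.inl ⟨h0, h1⟩
  apply ContinuousWithinAt.mono _ hsub
  apply ContinuousWithinAt.union
  · unfold ContinuousWithinAt
    rw [show isoUext 1 = 0 by simp [isoUext]]
    exact h1
  · apply ContinuousWithinAt.union
    · apply continuousWithinAt_of_notMem_closure
      simp
    · exact continuousWithinAt_singleton

lemma continuousOn_isoUext : ContinuousOn isoUext (Icc (0:ℝ) 1) := by
  intro x hx
  rcases eq_or_lt_of_le hx.1 with h0 | h0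
  · rw [← h0]; exact cwa_zero
  rcases eq_or_lt_of_le hx.2 with h1 | h1
  · rw [h1]; exact cwa_one
  · exact (hasDerivAt_isoUext ⟨h0, h1⟩).continuousAt.continuousWithinAt

lemma concaveOn_isoUext : ConcaveOn ℝ (Icc (0:ℝ) 1) isoUext := by
  apply AntitoneOn.concaveOn_of_deriv (convex_Icc 0 1) continuousOn_isoUext
  · intro x hx
    rw [interior_Icc] at hx
    exact (hasDerivAt_isoUext hx).differentiableAt.differentiableWithinAt
  · intro x hx y hy hxy
    rw [interior_Icc] at hx hy
    rw [(hasDerivAt_isoUext hx).deriv, (hasDerivAt_isoUext hy).deriv]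
    rcases eq_or_lt_of_le hxy with rfl | h
    · exact le_refl _
    · exact neg_le_neg (monotoneOn_gaussCdfInv hx hy h).le


/-- The Gaussian isoperimetry function `U`, extended by `U(0) = U(1) = 0`,
is strictly positive on `(0,1)` and concave on `[0,1]`; consequently `Φ = −U` is convex on
`[0,1]` and, on `(0,1)`, `−1/Φ'' = −U` is convex. -/
theorem isoUext_pos_concave_and_neg_convex :
    (∀ x ∈ Set.Ioo (0 : ℝ) 1, 0 < isoUext x) ∧
      ConcaveOn ℝ (Set.Icc (0 : ℝ) 1) isoUext ∧
      ConvexOn ℝ (Set.Icc (0 : ℝ) 1) (fun x => -isoUext x) ∧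
      ConvexOn ℝ (Set.Ioo (0 : ℝ) 1) (fun x => -isoUext x) := by
  refine ⟨fun x hx => ?_, concaveOn_isoUext, concaveOn_isoUext.neg,
    concaveOn_isoUext.neg.subset Set.Ioo_subset_Icc_self (convex_Ioo 0 1)⟩
  simp only [isoUext, if_pos hx]
  exact gaussPdf_pos _
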